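/- The map L₄ defined on (v𝔽)′ = {F ∈ 𝔽 : hF = 0 and F(ξ,y,z) = 0 for all y,z} by L₄(F) = −F₄(F) is an involutive linear isometry of (v𝔽)′ commuting with the action on 𝔽 of every linear isometry A of V with A∘φ = φ∘A and Aξ = ξ, and it yields the orthogonal decomposition (v𝔽)′ = 𝒩 ⊕ 𝒩̃, where 𝒩 = {F ∈ (v𝔽)′ : F = F₄(F)} is the (−1)-eigenspace and 𝒩̃ = {F ∈ (v𝔽)′ : F = −F₄(F)} is the (+1)-eigenspace; the components of F ∈ (v𝔽)′ in 𝒩 and 𝒩̃ are (1/2){F₂(F) + F₄(F)} and (1/2){F₂(F) − F₄(F)} respectively. -/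

import Mathlib

open scoped BigOperators RealInnerProductSpace

noncomputable section

variable {V : Type*} [NormedAddCommGroup V] [InnerProductSpace ℝ V]

/-- A map `V → V → V → ℝ` linear in each of its three arguments. -/
def Trilinear (F : V → V → V → ℝ) : Prop :=
  (∀ y z, IsLinearMap ℝ fun x => F x y z) ∧
  (∀ x z, IsLinearMap ℝ fun y => F x y z) ∧
  (∀ x y, IsLinearMap ℝ fun z => F x y z)

/-- Almost contact metric structure `(φ, ξ, η, g)` on `V` with `dim V = 2n+1`. -/
def ACM (n : ℕ) (φ : V →ₗ[ℝ] V) (ξ : V) (η : V →ₗ[ℝ] ℝ) : Prop :=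
  Module.finrank ℝ V = 2 * n + 1 ∧
  (∀ x, φ (φ x) = -x + η x • ξ) ∧
  φ ξ = 0 ∧
  (∀ x, η (φ x) = 0) ∧
  ⟪ξ, ξ⟫ = 1 ∧
  (∀ x y, ⟪φ x, φ y⟫ = ⟪x, y⟫ - η x * η y)

/-- Membership in the space `𝔽` of trilinear forms with the symmetries (1). -/
def InF (φ : V →ₗ[ℝ] V) (ξ : V) (η : V →ₗ[ℝ] ℝ) (F : V → V → V → ℝ) : Prop :=
  Trilinear F ∧
  (∀ x y z, F x y z = -F x z y) ∧
  (∀ x y z, F x y z = -F x (φ y) (φ z) + η y * F x ξ z + η z * F x y ξ)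

/-- `h x = -φ²x`. -/
def hMap (φ : V →ₗ[ℝ] V) (x : V) : V := -φ (φ x)

/-- `hF(x,y,z) = F(hx,hy,hz)`. -/
def hF (φ : V →ₗ[ℝ] V) (F : V → V → V → ℝ) : V → V → V → ℝ :=
  fun x y z => F (hMap φ x) (hMap φ y) (hMap φ z)

def F1 (ξ : V) (η : V →ₗ[ℝ] ℝ) (F : V → V → V → ℝ) : V → V → V → ℝ :=
  fun x y z => η x * F ξ y z

def F2 (ξ : V) (η : V →ₗ[ℝ] ℝ) (F : V → V → V → ℝ) : V → V → V → ℝ :=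
  fun x y z => η y * F x ξ z - η z * F x ξ y

def F3 (ξ : V) (η : V →ₗ[ℝ] ℝ) (F : V → V → V → ℝ) : V → V → V → ℝ :=
  fun x y z => η x * η y * F ξ ξ z - η x * η z * F ξ ξ y

def F4 (φ : V →ₗ[ℝ] V) (ξ : V) (η : V →ₗ[ℝ] ℝ) (F : V → V → V → ℝ) : V → V → V → ℝ :=
  fun x y z => η y * F (φ x) ξ (φ z) - η z * F (φ x) ξ (φ y)

def F5 (ξ : V) (η : V →ₗ[ℝ] ℝ) (F : V → V → V → ℝ) : V → V → V → ℝ :=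
  fun x y z => η y * F z ξ x - η z * F y ξ x

def F6 (φ : V →ₗ[ℝ] V) (ξ : V) (η : V →ₗ[ℝ] ℝ) (F : V → V → V → ℝ) : V → V → V → ℝ :=
  fun x y z => η y * F (φ z) ξ (φ x) - η z * F (φ y) ξ (φ x)

/-- `f(F)(z) = Σᵢ F(eᵢ, eᵢ, z)`. -/
def fTr {ι : Type*} [Fintype ι] (e : OrthonormalBasis ι ℝ V) (F : V → V → V → ℝ) (z : V) : ℝ :=
  ∑ i, F (e i) (e i) z

/-- `f*(F)(z) = Σᵢ F(eᵢ, φ eᵢ, z)`. -/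
def fTrStar {ι : Type*} [Fintype ι] (φ : V →ₗ[ℝ] V) (e : OrthonormalBasis ι ℝ V)
    (F : V → V → V → ℝ) (z : V) : ℝ :=
  ∑ i, F (e i) (φ (e i)) z

/-- The inner product on `𝔽`: `⟨F,G⟩ = Σ_{i,j,k} F(eᵢ,eⱼ,e_k) G(eᵢ,eⱼ,e_k)`. -/
def innerF {ι : Type*} [Fintype ι] (e : OrthonormalBasis ι ℝ V) (F G : V → V → V → ℝ) : ℝ :=
  ∑ i, ∑ j, ∑ k, F (e i) (e j) (e k) * G (e i) (e j) (e k)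

def F7 (n : ℕ) {ι : Type*} [Fintype ι] (e : OrthonormalBasis ι ℝ V) (ξ : V) (η : V →ₗ[ℝ] ℝ)
    (F : V → V → V → ℝ) : V → V → V → ℝ :=
  fun x y z => (1 / (2 * (n : ℝ))) * fTr e F ξ * (η z * ⟪x, y⟫ - η y * ⟪x, z⟫)

def F8 (n : ℕ) (φ : V →ₗ[ℝ] V) {ι : Type*} [Fintype ι] (e : OrthonormalBasis ι ℝ V) (ξ : V)
    (η : V →ₗ[ℝ] ℝ) (F : V → V → V → ℝ) : V → V → V → ℝ :=
  fun x y z => -(1 / (2 * (n : ℝ))) * fTrStar φ e F ξ * (η z * ⟪x, φ y⟫ - η y * ⟪x, φ z⟫)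

def F9 (n : ℕ) (φ : V →ₗ[ℝ] V) {ι : Type*} [Fintype ι] (e : OrthonormalBasis ι ℝ V)
    (F : V → V → V → ℝ) : V → V → V → ℝ :=
  fun x y z => (1 / (2 * ((n : ℝ) - 1))) *
    (⟪hMap φ x, hMap φ y⟫ * fTr e F z - ⟪hMap φ x, hMap φ z⟫ * fTr e F y
      - ⟪x, φ y⟫ * fTr e F (φ z) + ⟪x, φ z⟫ * fTr e F (φ y))

def F10 (φ : V →ₗ[ℝ] V) (F : V → V → V → ℝ) : V → V → V → ℝ :=
  fun x y z => (1 / 2) * (F x y z + F (φ x) (φ y) z)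

def F11 (φ : V →ₗ[ℝ] V) (F : V → V → V → ℝ) : V → V → V → ℝ :=
  fun x y z => (1 / 6) * (F x y z + F y z x + F z x y
    - F (φ x) (φ y) z - F (φ y) (φ z) x - F (φ z) (φ x) y)

def F12 (φ : V →ₗ[ℝ] V) (F : V → V → V → ℝ) : V → V → V → ℝ :=
  fun x y z => (1 / 2) * (F x y z - F (φ x) (φ y) z)

/-- The action of a linear isometry `A` of `V` on trilinear forms:
`(A·F)(x,y,z) = F(A⁻¹x, A⁻¹y, A⁻¹z)`. -/
def actA (A : V ≃ₗᵢ[ℝ] V) (F : V → V → V → ℝ) : V → V → V → ℝ :=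
  fun x y z => F (A.symm x) (A.symm y) (A.symm z)

def L1 (ξ : V) (η : V →ₗ[ℝ] ℝ) (F : V → V → V → ℝ) : V → V → V → ℝ :=
  fun x y z => F x y z - 2 * F3 ξ η F x y z

def L2 (ξ : V) (η : V →ₗ[ℝ] ℝ) (F : V → V → V → ℝ) : V → V → V → ℝ :=
  fun x y z => F x y z - 2 * (F1 ξ η F x y z + F2 ξ η F x y z)

def L3 (ξ : V) (η : V →ₗ[ℝ] ℝ) (F : V → V → V → ℝ) : V → V → V → ℝ :=
  fun x y z => F2 ξ η F x y z - F1 ξ η F x y z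

def L4 (φ : V →ₗ[ℝ] V) (ξ : V) (η : V →ₗ[ℝ] ℝ) (F : V → V → V → ℝ) : V → V → V → ℝ :=
  fun x y z => -F4 φ ξ η F x y z

def L5 (ξ : V) (η : V →ₗ[ℝ] ℝ) (F : V → V → V → ℝ) : V → V → V → ℝ :=
  fun x y z => -F5 ξ η F x y z

def L6 (n : ℕ) {ι : Type*} [Fintype ι] (e : OrthonormalBasis ι ℝ V) (ξ : V) (η : V →ₗ[ℝ] ℝ)
    (F : V → V → V → ℝ) : V → V → V → ℝ :=
  fun x y z => F x y z - 2 * F7 n e ξ η F x y z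

def L7 (n : ℕ) (φ : V →ₗ[ℝ] V) {ι : Type*} [Fintype ι] (e : OrthonormalBasis ι ℝ V) (ξ : V)
    (η : V →ₗ[ℝ] ℝ) (F : V → V → V → ℝ) : V → V → V → ℝ :=
  fun x y z => F x y z - 2 * F8 n φ e ξ η F x y z

/-- The subspace `𝔽₁ = {F ∈ 𝔽 : F = F₃(F)}`. -/
def MemF1sub (φ : V →ₗ[ℝ] V) (ξ : V) (η : V →ₗ[ℝ] ℝ) (F : V → V → V → ℝ) : Prop :=
  InF φ ξ η F ∧ F = F3 ξ η F

/-- The subspace `v𝔽 = {F ∈ 𝔽 : hF = 0, ω(F) = 0}`. -/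
def MemVF (φ : V →ₗ[ℝ] V) (ξ : V) (η : V →ₗ[ℝ] ℝ) (F : V → V → V → ℝ) : Prop :=
  InF φ ξ η F ∧ hF φ F = 0 ∧ ∀ z, F ξ ξ z = 0

/-- The subspace `h𝔽 = {F ∈ 𝔽 : F₁(F) = F₂(F) = 0}`. -/
def MemHF (φ : V →ₗ[ℝ] V) (ξ : V) (η : V →ₗ[ℝ] ℝ) (F : V → V → V → ℝ) : Prop :=
  InF φ ξ η F ∧ F1 ξ η F = 0 ∧ F2 ξ η F = 0

/-- The subspace `(v𝔽)′ = {F ∈ 𝔽 : hF = 0, F(ξ,·,·) = 0}`. -/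
def MemVF' (φ : V →ₗ[ℝ] V) (ξ : V) (η : V →ₗ[ℝ] ℝ) (F : V → V → V → ℝ) : Prop :=
  InF φ ξ η F ∧ hF φ F = 0 ∧ ∀ y z, F ξ y z = 0

/-- The subspace `𝔽₈ = {F ∈ 𝔽 : hF = 0, F(·,·,ξ) = 0}`. -/
def MemF8sub (φ : V →ₗ[ℝ] V) (ξ : V) (η : V →ₗ[ℝ] ℝ) (F : V → V → V → ℝ) : Prop :=
  InF φ ξ η F ∧ hF φ F = 0 ∧ ∀ x y, F x y ξ = 0

/-- The subspace `𝒩 = {F ∈ (v𝔽)′ : F = F₄(F)}`. -/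
def MemN (φ : V →ₗ[ℝ] V) (ξ : V) (η : V →ₗ[ℝ] ℝ) (F : V → V → V → ℝ) : Prop :=
  MemVF' φ ξ η F ∧ F = F4 φ ξ η F

/-- The subspace `𝒩̃ = {F ∈ (v𝔽)′ : F = -F₄(F)}`. -/
def MemNt (φ : V →ₗ[ℝ] V) (ξ : V) (η : V →ₗ[ℝ] ℝ) (F : V → V → V → ℝ) : Prop :=
  MemVF' φ ξ η F ∧ F = -F4 φ ξ η F

/-- The subspace `𝒬𝒮𝔽 = {F ∈ (v𝔽)′ : F = F₄(F) = F₅(F)}`. -/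
def MemQS (φ : V →ₗ[ℝ] V) (ξ : V) (η : V →ₗ[ℝ] ℝ) (F : V → V → V → ℝ) : Prop :=
  MemVF' φ ξ η F ∧ F = F4 φ ξ η F ∧ F = F5 ξ η F

/-- The subspace `𝒬𝒦𝔽 = {F ∈ (v𝔽)′ : F = F₄(F) = -F₅(F)}`. -/
def MemQK (φ : V →ₗ[ℝ] V) (ξ : V) (η : V →ₗ[ℝ] ℝ) (F : V → V → V → ℝ) : Prop :=
  MemVF' φ ξ η F ∧ F = F4 φ ξ η F ∧ F = -F5 ξ η F

/-- The subspace `𝔽₆ = {F ∈ (v𝔽)′ : F = -F₄(F) = F₅(F)}`. -/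
def MemF6sub (φ : V →ₗ[ℝ] V) (ξ : V) (η : V →ₗ[ℝ] ℝ) (F : V → V → V → ℝ) : Prop :=
  MemVF' φ ξ η F ∧ F = -F4 φ ξ η F ∧ F = F5 ξ η F

/-- The subspace `𝔽₇ = {F ∈ (v𝔽)′ : F = -F₄(F) = -F₅(F)}`. -/
def MemF7sub (φ : V →ₗ[ℝ] V) (ξ : V) (η : V →ₗ[ℝ] ℝ) (F : V → V → V → ℝ) : Prop :=
  MemVF' φ ξ η F ∧ F = -F4 φ ξ η F ∧ F = -F5 ξ η F

/-- The subspace `𝔽₂ = {F ∈ 𝔽 : F = F₇(F)}`. -/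
def MemF2sub (n : ℕ) {ι : Type*} [Fintype ι] (e : OrthonormalBasis ι ℝ V) (φ : V →ₗ[ℝ] V)
    (ξ : V) (η : V →ₗ[ℝ] ℝ) (F : V → V → V → ℝ) : Prop :=
  InF φ ξ η F ∧ F = F7 n e ξ η F

/-- The subspace `𝔽₃ = {F ∈ 𝔽 : F = F₈(F)}`. -/
def MemF3sub (n : ℕ) {ι : Type*} [Fintype ι] (e : OrthonormalBasis ι ℝ V) (φ : V →ₗ[ℝ] V)
    (ξ : V) (η : V →ₗ[ℝ] ℝ) (F : V → V → V → ℝ) : Prop :=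
  InF φ ξ η F ∧ F = F8 n φ e ξ η F

/-- The subspace `𝔽₄ = {F ∈ 𝔽 : F = F₄(F) = F₅(F), f(F)(ξ) = 0}`. -/
def MemF4sub (n : ℕ) {ι : Type*} [Fintype ι] (e : OrthonormalBasis ι ℝ V) (φ : V →ₗ[ℝ] V)
    (ξ : V) (η : V →ₗ[ℝ] ℝ) (F : V → V → V → ℝ) : Prop :=
  InF φ ξ η F ∧ F = F4 φ ξ η F ∧ F = F5 ξ η F ∧ fTr e F ξ = 0

/-- The subspace `𝔽₅ = {F ∈ 𝔽 : F = F₄(F) = -F₅(F), f*(F)(ξ) = 0}`. -/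
def MemF5sub (n : ℕ) {ι : Type*} [Fintype ι] (e : OrthonormalBasis ι ℝ V) (φ : V →ₗ[ℝ] V)
    (ξ : V) (η : V →ₗ[ℝ] ℝ) (F : V → V → V → ℝ) : Prop :=
  InF φ ξ η F ∧ F = F4 φ ξ η F ∧ F = -F5 ξ η F ∧ fTrStar φ e F ξ = 0

/-- The subspace `𝔽₄ = {F ∈ (v𝔽)′ : F = F₄(F) = F₅(F), f(F)(ξ) = 0}`. -/
def MemF4sub' (n : ℕ) {ι : Type*} [Fintype ι] (e : OrthonormalBasis ι ℝ V) (φ : V →ₗ[ℝ] V)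
    (ξ : V) (η : V →ₗ[ℝ] ℝ) (F : V → V → V → ℝ) : Prop :=
  MemVF' φ ξ η F ∧ F = F4 φ ξ η F ∧ F = F5 ξ η F ∧ fTr e F ξ = 0

/-- The subspace `𝔽₅ = {F ∈ (v𝔽)′ : F = F₄(F) = -F₅(F), f*(F)(ξ) = 0}`. -/
def MemF5sub' (n : ℕ) {ι : Type*} [Fintype ι] (e : OrthonormalBasis ι ℝ V) (φ : V →ₗ[ℝ] V)
    (ξ : V) (η : V →ₗ[ℝ] ℝ) (F : V → V → V → ℝ) : Prop :=
  MemVF' φ ξ η F ∧ F = F4 φ ξ η F ∧ F = -F5 ξ η F ∧ fTrStar φ e F ξ = 0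

/-- The subspace `𝔽₉ = {F ∈ 𝔽 : F = hF = F₉(F)}`. -/
def MemF9sub (n : ℕ) {ι : Type*} [Fintype ι] (e : OrthonormalBasis ι ℝ V) (φ : V →ₗ[ℝ] V)
    (ξ : V) (η : V →ₗ[ℝ] ℝ) (F : V → V → V → ℝ) : Prop :=
  InF φ ξ η F ∧ F = hF φ F ∧ F = F9 n φ e F

/-- The subspace `𝔽₁₀ = {F ∈ 𝔽 : F = hF = F₁₀(F) - F₉(F)}`. -/
def MemF10sub (n : ℕ) {ι : Type*} [Fintype ι] (e : OrthonormalBasis ι ℝ V) (φ : V →ₗ[ℝ] V)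
    (ξ : V) (η : V →ₗ[ℝ] ℝ) (F : V → V → V → ℝ) : Prop :=
  InF φ ξ η F ∧ F = hF φ F ∧ F = F10 φ F - F9 n φ e F

/-- The subspace `𝔽₁₁ = {F ∈ 𝔽 : F = hF = F₁₁(F)}`. -/
def MemF11sub (φ : V →ₗ[ℝ] V) (ξ : V) (η : V →ₗ[ℝ] ℝ) (F : V → V → V → ℝ) : Prop :=
  InF φ ξ η F ∧ F = hF φ F ∧ F = F11 φ F

/-- The subspace `𝔽₁₂ = {F ∈ 𝔽 : F = hF = F₁₂(F) - F₁₁(F)}`. -/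
def MemF12sub (φ : V →ₗ[ℝ] V) (ξ : V) (η : V →ₗ[ℝ] ℝ) (F : V → V → V → ℝ) : Prop :=
  InF φ ξ η F ∧ F = hF φ F ∧ F = F12 φ F - F11 φ F

section Helpers

variable {n : ℕ} {φ : V →ₗ[ℝ] V} {ξ : V} {η : V →ₗ[ℝ] ℝ}

lemma islin_sum {ι : Type*} (s : Finset ι) (f : V → ℝ) (hf : IsLinearMap ℝ f)
    (c : ι → ℝ) (x : ι → V) :
    f (∑ i ∈ s, c i • x i) = ∑ i ∈ s, c i * f (x i) := by
  classical
  induction s using Finset.induction with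
  | empty => simp [hf.map_zero]
  | insert _ _ h ih =>
      rw [Finset.sum_insert h, hf.map_add, hf.map_smul, Finset.sum_insert h, ih]
      simp [smul_eq_mul]

lemma acm_eta_xi (h : ACM n φ ξ η) : η ξ = 1 := by
  obtain ⟨-, h2, h3, -, h5, -⟩ := h
  have hz : (0 : V) = -ξ + η ξ • ξ := by
    have := h2 ξ; rwa [h3, map_zero] at this
  have hne : ξ ≠ 0 := by
    intro hh; rw [hh, inner_zero_left] at h5; norm_num at h5
  have : (η ξ - 1) • ξ = 0 := by
    rw [sub_smul, one_smul]; linear_combination (norm := module) -hz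
  rcases smul_eq_zero.mp this with h' | h'
  · linarith [sub_eq_zero.mp (by exact_mod_cast h')]
  · exact absurd h' hne

lemma acm_eta_inner (h : ACM n φ ξ η) (x : V) : η x = ⟪x, ξ⟫ := by
  have h6 := h.2.2.2.2.2 x ξ
  rw [h.2.2.1, inner_zero_right, acm_eta_xi h, mul_one] at h6
  linarith

lemma acm_phi_skew (h : ACM n φ ξ η) (x y : V) : ⟪φ x, y⟫ = -⟪x, φ y⟫ := by
  have h6 := h.2.2.2.2.2 x (φ y)
  rw [h.2.2.2.1 y, mul_zero, sub_zero, h.2.1 y] at h6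
  have hpx : ⟪φ x, ξ⟫ = 0 := by rw [← acm_eta_inner h]; exact h.2.2.2.1 x
  rw [inner_add_right, inner_neg_right, real_inner_smul_right, hpx, mul_zero, add_zero] at h6
  linarith

lemma acm_h (h : ACM n φ ξ η) (x : V) : hMap φ x = x - η x • ξ := by
  rw [hMap, h.2.1 x]; abel

lemma acm_eta_h (h : ACM n φ ξ η) (x : V) : η (hMap φ x) = 0 := by
  rw [acm_h h, map_sub, map_smul, acm_eta_xi h, smul_eq_mul, mul_one, sub_self]

/-- Parseval-type lemma: for linear functionals vanishing at `ξ`,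
sums over `φ (e i)` equal sums over `e i`. -/
lemma parseval_phi (h : ACM n φ ξ η) {ι : Type*} [Fintype ι] (e : OrthonormalBasis ι ℝ V)
    (f g : V → ℝ) (hf : IsLinearMap ℝ f) (hg : IsLinearMap ℝ g)
    (hfξ : f ξ = 0) (hgξ : g ξ = 0) :
    ∑ i, f (φ (e i)) * g (φ (e i)) = ∑ i, f (e i) * g (e i) := by
  set u := ∑ i, f (e i) • e i with hu_def
  set v := ∑ i, g (e i) • e i with hv_def
  have key : ∀ (f' : V → ℝ), IsLinearMap ℝ f' →
      ∀ x, ⟪∑ i, f' (e i) • e i, x⟫ = f' x := by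
    intro f' hf' x
    rw [sum_inner]
    simp_rw [real_inner_smul_left]
    calc ∑ i, f' (e i) * ⟪e i, x⟫ = ∑ i, e.repr x i * f' (e i) := by
          simp_rw [e.repr_apply_apply]; exact Finset.sum_congr rfl fun i _ => mul_comm _ _
      _ = f' x := by
          conv_rhs => rw [← e.sum_repr x]
          rw [islin_sum _ f' hf']
  have hu : ∀ x, ⟪u, x⟫ = f x := key f hf
  have hv : ∀ x, ⟪v, x⟫ = g x := key g hg
  have step1 : ∑ i, f (φ (e i)) * g (φ (e i)) = ⟪φ u, φ v⟫ := by
    rw [← e.sum_inner_mul_inner (φ u) (φ v)]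
    refine Finset.sum_congr rfl fun i _ => ?_
    rw [← hu (φ (e i)), ← hv (φ (e i))]
    have h1 : ⟪u, φ (e i)⟫ = -⟪φ u, e i⟫ := by rw [acm_phi_skew h u (e i)]; ring
    have h2 : ⟪v, φ (e i)⟫ = -⟪φ v, e i⟫ := by rw [acm_phi_skew h v (e i)]; ring
    rw [h1, h2, real_inner_comm (φ v) (e i)]; ring
  have step2 : ⟪φ u, φ v⟫ = ⟪u, v⟫ - η u * η v := h.2.2.2.2.2 u v
  have hηu : η u = 0 := by rw [acm_eta_inner h, hu ξ, hfξ]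
  have hηv : η v = 0 := by rw [acm_eta_inner h, hv ξ, hgξ]
  have step3 : ⟪u, v⟫ = ∑ i, f (e i) * g (e i) := by
    rw [← e.sum_inner_mul_inner u v]
    refine Finset.sum_congr rfl fun i _ => ?_
    rw [hu (e i), real_inner_comm, hv (e i)]
  rw [step1, step2, hηu, hηv, step3]; ring

/-- On `(v𝔽)′`, `F(x,ξ,ξ) = 0`. -/
lemma vf'_xi_xi (hF : MemVF' φ ξ η F) (x : V) : F x ξ ξ = 0 := by
  have := hF.1.2.1 x ξ ξ; linarith

/-- On `(v𝔽)′`, `F = F₂(F)` pointwise. -/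
lemma vf'_eq_F2 {F : V → V → V → ℝ} (h : ACM n φ ξ η) (hF : MemVF' φ ξ η F) :
    ∀ x y z, F x y z = η y * F x ξ z - η z * F x ξ y := by
  intro x y z
  obtain ⟨⟨⟨ht1, ht2, ht3⟩, hanti, -⟩, hhf, hξ⟩ := hF
  have h0 : F (hMap φ x) (hMap φ y) (hMap φ z) = 0 := by
    have := congrFun (congrFun (congrFun hhf x) y) z
    simpa [hF] using this
  rw [acm_h h, acm_h h, acm_h h] at h0
  rw [(ht1 _ _).map_sub, (ht1 _ _).map_smul] at h0
  rw [(ht2 _ _).map_sub, (ht2 _ _).map_smul, (ht2 _ _).map_sub, (ht2 _ _).map_smul] at h0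
  rw [(ht3 _ _).map_sub, (ht3 _ _).map_smul, (ht3 _ _).map_sub, (ht3 _ _).map_smul,
      (ht3 _ _).map_sub, (ht3 _ _).map_smul, (ht3 _ _).map_sub, (ht3 _ _).map_smul] at h0
  simp only [smul_eq_mul, hξ] at h0
  have hxx : F x ξ ξ = 0 := by have := hanti x ξ ξ; linarith
  have hyx : F x y ξ = - F x ξ y := by have := hanti x y ξ; linarith
  rw [hxx, hyx] at h0
  linarith

end Helpers

section Helpers2

variable {n : ℕ} {φ : V →ₗ[ℝ] V} {ξ : V} {η : V →ₗ[ℝ] ℝ} {F G : V → V → V → ℝ}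

/-- `F₄(F)(x,ξ,z) = F(φx,ξ,φz)` given trilinearity. -/
lemma F4_xi (h : ACM n φ ξ η) (htri : Trilinear F) (x z : V) :
    F4 φ ξ η F x ξ z = F (φ x) ξ (φ z) := by
  simp only [F4, acm_eta_xi h, one_mul, h.2.2.1]
  rw [(htri.2.2 _ _).map_zero]
  ring

/-- `F(φ²x, ξ, φ²z) = F(x,ξ,z)` on `(v𝔽)′`. -/
lemma vf'_phi2 (h : ACM n φ ξ η) (hF : MemVF' φ ξ η F) (x z : V) :
    F (φ (φ x)) ξ (φ (φ z)) = F x ξ z := by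
  obtain ⟨⟨⟨ht1, ht2, ht3⟩, hanti, -⟩, -, hξ⟩ := hF
  rw [h.2.1 x, h.2.1 z]
  rw [(ht1 _ _).map_add, (ht1 _ _).map_neg, (ht1 _ _).map_smul]
  rw [(ht3 _ _).map_add, (ht3 _ _).map_neg, (ht3 _ _).map_smul]
  simp only [smul_eq_mul, hξ]
  have hxx : F x ξ ξ = 0 := by have := hanti x ξ ξ; linarith
  rw [hxx]
  ring

/-- `F₄(F₄(F)) = F₂(F) = F` pointwise on `(v𝔽)′`. -/
lemma vf'_F4_F4 (h : ACM n φ ξ η) (hF : MemVF' φ ξ η F) (x y z : V) :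
    F4 φ ξ η (F4 φ ξ η F) x y z = F x y z := by
  have htri := hF.1.1
  rw [show F4 φ ξ η (F4 φ ξ η F) x y z
      = η y * F4 φ ξ η F (φ x) ξ (φ z) - η z * F4 φ ξ η F (φ x) ξ (φ y) from rfl]
  rw [F4_xi h htri, F4_xi h htri, vf'_phi2 h hF, vf'_phi2 h hF]
  exact (vf'_eq_F2 h hF x y z).symm

/-- `F₄(F) ∈ (v𝔽)′` whenever `F ∈ (v𝔽)′`. -/
lemma vf'_F4 (h : ACM n φ ξ η) (hF : MemVF' φ ξ η F) : MemVF' φ ξ η (F4 φ ξ η F) := by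
  obtain ⟨⟨⟨ht1, ht2, ht3⟩, hanti, hthird⟩, hhf, hξ⟩ := hF
  have hz3 : ∀ a b, F a b 0 = 0 := fun a b => (ht3 a b).map_zero
  have hz1 : ∀ b c, F 0 b c = 0 := fun b c => (ht1 b c).map_zero
  refine ⟨⟨⟨?_, ?_, ?_⟩, ?_, ?_⟩, ?_, ?_⟩
  · intro y z
    constructor
    · intro a b
      simp only [F4, map_add, (ht1 _ _).map_add]; ring
    · intro c a
      simp only [F4, map_smul, (ht1 _ _).map_smul, smul_eq_mul]; ring
  · intro x z
    constructor
    · intro a b; simp only [F4, map_add, (ht3 _ _).map_add]; ring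
    · intro c a; simp only [F4, map_smul, (ht3 _ _).map_smul, smul_eq_mul]; ring
  · intro x y
    constructor
    · intro a b; simp only [F4, map_add, (ht3 _ _).map_add]; ring
    · intro c a; simp only [F4, map_smul, (ht3 _ _).map_smul, smul_eq_mul]; ring
  · intro x y z; simp only [F4]; ring
  · intro x y z
    simp only [F4, h.2.2.2.1, acm_eta_xi h, h.2.2.1, hz3, one_mul, zero_mul, mul_zero]
    ring
  · funext x y z
    simp [hF, F4, acm_eta_h h]
  · intro y z
    simp [F4, h.2.2.1, hz1]

/-- `(v𝔽)′` is closed under pointwise linear combinations. -/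
lemma vf'_combo (a b : ℝ) (hF : MemVF' φ ξ η F) (hG : MemVF' φ ξ η G) :
    MemVF' φ ξ η (fun x y z => a * F x y z + b * G x y z) := by
  obtain ⟨⟨⟨hFt1, hFt2, hFt3⟩, hFanti, hFthird⟩, hFhf, hFξ⟩ := hF
  obtain ⟨⟨⟨hGt1, hGt2, hGt3⟩, hGanti, hGthird⟩, hGhf, hGξ⟩ := hG
  refine ⟨⟨⟨?_, ?_, ?_⟩, ?_, ?_⟩, ?_, ?_⟩
  · intro y z
    exact ⟨fun p q => by simp only [(hFt1 y z).map_add, (hGt1 y z).map_add]; ring,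
           fun c p => by simp only [(hFt1 y z).map_smul, (hGt1 y z).map_smul, smul_eq_mul]; ring⟩
  · intro x z
    exact ⟨fun p q => by simp only [(hFt2 x z).map_add, (hGt2 x z).map_add]; ring,
           fun c p => by simp only [(hFt2 x z).map_smul, (hGt2 x z).map_smul, smul_eq_mul]; ring⟩
  · intro x y
    exact ⟨fun p q => by simp only [(hFt3 x y).map_add, (hGt3 x y).map_add]; ring,
           fun c p => by simp only [(hFt3 x y).map_smul, (hGt3 x y).map_smul, smul_eq_mul]; ring⟩
  · intro x y z
    show a * F x y z + b * G x y z = -(a * F x z y + b * G x z y)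
    rw [hFanti x y z, hGanti x y z]; ring
  · intro x y z
    show a * F x y z + b * G x y z
      = -(a * F x (φ y) (φ z) + b * G x (φ y) (φ z))
        + η y * (a * F x ξ z + b * G x ξ z) + η z * (a * F x y ξ + b * G x y ξ)
    rw [hFthird x y z, hGthird x y z]; ring
  · funext x y z
    have h1 := congrFun (congrFun (congrFun hFhf x) y) z
    have h2 := congrFun (congrFun (congrFun hGhf x) y) z
    simp only [hF, Pi.zero_apply] at h1 h2 ⊢
    rw [h1, h2]; ring
  · intro y z
    show a * F ξ y z + b * G ξ y z = 0
    rw [hFξ y z, hGξ y z]; ring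

/-- `F₄` distributes over pointwise linear combinations. -/
lemma F4_combo (a b : ℝ) (F G : V → V → V → ℝ) (x y z : V) :
    F4 φ ξ η (fun x y z => a * F x y z + b * G x y z) x y z
      = a * F4 φ ξ η F x y z + b * F4 φ ξ η G x y z := by
  simp only [F4]; ring

/-- An algebraic double-sum expansion. -/
lemma sum_expand {ι : Type*} [Fintype ι] (a b c : ι → ℝ) :
    ∑ j, ∑ k, (a j * b k - a k * b j) * (a j * c k - a k * c j)
      = 2 * ((∑ j, a j * a j) * (∑ j, b j * c j))
        - 2 * ((∑ j, a j * b j) * (∑ j, a j * c j)) := by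
  have hterm : ∀ j k : ι, (a j * b k - a k * b j) * (a j * c k - a k * c j)
      = (a j * a j) * (b k * c k) - (a j * c j) * (a k * b k)
        - (a j * b j) * (a k * c k) + (b j * c j) * (a k * a k) := by
    intro j k; ring
  simp_rw [hterm, Finset.sum_add_distrib, Finset.sum_sub_distrib,
    ← Finset.mul_sum, ← Finset.sum_mul]
  ring

/-- The inner product on `(v𝔽)′` in terms of `B(x,z) = F(x,ξ,z)`. -/
lemma vf'_innerF (h : ACM n φ ξ η) {ι : Type*} [Fintype ι] (e : OrthonormalBasis ι ℝ V)
    (hF : MemVF' φ ξ η F) (hG : MemVF' φ ξ η G) :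
    innerF e F G = 2 * ∑ i, ∑ k, F (e i) ξ (e k) * G (e i) ξ (e k) := by
  have hξsum : ∑ j, η (e j) • e j = ξ := by
    have : ∀ j, η (e j) = e.repr ξ j := by
      intro j; rw [acm_eta_inner h, e.repr_apply_apply, real_inner_comm]
    simp_rw [this]; exact e.sum_repr ξ
  have hη2 : ∑ j, η (e j) * η (e j) = 1 := by
    have : ∀ j : ι, η (e j) * η (e j) = ⟪ξ, e j⟫ * ⟪e j, ξ⟫ := by
      intro j
      rw [acm_eta_inner h, real_inner_comm (e j) ξ]
    simp_rw [this]
    rw [e.sum_inner_mul_inner ξ ξ]; exact h.2.2.2.2.1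
  have hBξ : ∀ (F' : V → V → V → ℝ), MemVF' φ ξ η F' → ∀ x : V,
      ∑ j, η (e j) * F' x ξ (e j) = 0 := by
    intro F' hF' x
    have ht3 := hF'.1.1.2.2 x ξ
    rw [← islin_sum Finset.univ _ ht3 (fun j => η (e j)) (fun j => e j), hξsum,
      vf'_xi_xi hF']
  have expand : ∀ i j k, F (e i) (e j) (e k) * G (e i) (e j) (e k)
      = (η (e j) * F (e i) ξ (e k) - η (e k) * F (e i) ξ (e j))
        * (η (e j) * G (e i) ξ (e k) - η (e k) * G (e i) ξ (e j)) := by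
    intro i j k
    rw [vf'_eq_F2 h hF (e i) (e j) (e k), vf'_eq_F2 h hG (e i) (e j) (e k)]
  unfold innerF
  simp_rw [expand]
  have : ∀ i : ι, ∑ j, ∑ k,
      (η (e j) * F (e i) ξ (e k) - η (e k) * F (e i) ξ (e j))
        * (η (e j) * G (e i) ξ (e k) - η (e k) * G (e i) ξ (e j))
      = 2 * ∑ k, F (e i) ξ (e k) * G (e i) ξ (e k) := by
    intro i
    rw [sum_expand (fun j => η (e j)) (fun j => F (e i) ξ (e j)) (fun j => G (e i) ξ (e j))]
    rw [hη2, hBξ F hF (e i), hBξ G hG (e i)]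
    ring
  simp_rw [this]
  rw [← Finset.mul_sum]

/-- `L4(F)(x,ξ,z) = -F(φx,ξ,φz)`. -/
lemma L4_xi (h : ACM n φ ξ η) (htri : Trilinear F) (x z : V) :
    L4 φ ξ η F x ξ z = -F (φ x) ξ (φ z) := by
  rw [show L4 φ ξ η F x ξ z = -(F4 φ ξ η F x ξ z) from rfl, F4_xi h htri]

end Helpers2

theorem stmt12 (n : ℕ) (φ : V →ₗ[ℝ] V) (ξ : V) (η : V →ₗ[ℝ] ℝ)
    (hacm : ACM n φ ξ η) (e : OrthonormalBasis (Fin (2 * n + 1)) ℝ V) :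
    (∀ F, MemVF' φ ξ η F → MemVF' φ ξ η (L4 φ ξ η F)) ∧
    (∀ (a : ℝ) (F G : V → V → V → ℝ),
      L4 φ ξ η (fun x y z => a * F x y z + G x y z) =
        fun x y z => a * L4 φ ξ η F x y z + L4 φ ξ η G x y z) ∧
    (∀ F, MemVF' φ ξ η F → L4 φ ξ η (L4 φ ξ η F) = F) ∧
    (∀ F G, MemVF' φ ξ η F → MemVF' φ ξ η G →
      innerF e (L4 φ ξ η F) (L4 φ ξ η G) = innerF e F G) ∧
    (∀ A : V ≃ₗᵢ[ℝ] V, (∀ x, A (φ x) = φ (A x)) → A ξ = ξ →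
      ∀ F, MemVF' φ ξ η F → L4 φ ξ η (actA A F) = actA A (L4 φ ξ η F)) ∧
    (∀ F, MemVF' φ ξ η F →
      (L4 φ ξ η F = -F ↔ F = F4 φ ξ η F) ∧
      (L4 φ ξ η F = F ↔ F = -F4 φ ξ η F)) ∧
    (∀ F, MemVF' φ ξ η F →
      MemN φ ξ η (fun x y z => (1 / 2) * (F2 ξ η F x y z + F4 φ ξ η F x y z)) ∧
      MemNt φ ξ η (fun x y z => (1 / 2) * (F2 ξ η F x y z - F4 φ ξ η F x y z)) ∧
      ∀ x y z, F x y z = (1 / 2) * (F2 ξ η F x y z + F4 φ ξ η F x y z) +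
        (1 / 2) * (F2 ξ η F x y z - F4 φ ξ η F x y z)) ∧
    (∀ F, MemVF' φ ξ η F →
      ∃! p : (V → V → V → ℝ) × (V → V → V → ℝ),
        MemN φ ξ η p.1 ∧ MemNt φ ξ η p.2 ∧ F = p.1 + p.2) ∧
    (∀ F G, MemN φ ξ η F → MemNt φ ξ η G → innerF e F G = 0) := by
  have hL4mem : ∀ F, MemVF' φ ξ η F → MemVF' φ ξ η (L4 φ ξ η F) := by
    intro F hF
    have heq : L4 φ ξ η F = fun x y z => (-1 : ℝ) * F4 φ ξ η F x y z + 0 * F x y z := by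
      funext x y z; simp [L4]
    rw [heq]
    exact vf'_combo (-1) 0 (vf'_F4 hacm hF) hF
  have hiso : ∀ F G, MemVF' φ ξ η F → MemVF' φ ξ η G →
      innerF e (L4 φ ξ η F) (L4 φ ξ η G) = innerF e F G := by
    intro F G hF hG
    rw [vf'_innerF hacm e (hL4mem F hF) (hL4mem G hG), vf'_innerF hacm e hF hG]
    congr 1
    have hstep : ∀ i k, L4 φ ξ η F (e i) ξ (e k) * L4 φ ξ η G (e i) ξ (e k)
        = F (φ (e i)) ξ (φ (e k)) * G (φ (e i)) ξ (φ (e k)) := by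
      intro i k; rw [L4_xi hacm hF.1.1, L4_xi hacm hG.1.1]; ring
    simp_rw [hstep]
    have hinner : ∀ i, ∑ k, F (φ (e i)) ξ (φ (e k)) * G (φ (e i)) ξ (φ (e k))
        = ∑ k, F (φ (e i)) ξ (e k) * G (φ (e i)) ξ (e k) := by
      intro i
      exact parseval_phi hacm e (fun w => F (φ (e i)) ξ w) (fun w => G (φ (e i)) ξ w)
        (hF.1.1.2.2 _ _) (hG.1.1.2.2 _ _) (vf'_xi_xi hF _) (vf'_xi_xi hG _)
    simp_rw [hinner]
    rw [Finset.sum_comm]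
    have h2 : ∀ k, ∑ i, F (φ (e i)) ξ (e k) * G (φ (e i)) ξ (e k)
        = ∑ i, F (e i) ξ (e k) * G (e i) ξ (e k) := by
      intro k
      exact parseval_phi hacm e (fun w => F w ξ (e k)) (fun w => G w ξ (e k))
        (hF.1.1.1 _ _) (hG.1.1.1 _ _) (hF.2.2 _ _) (hG.2.2 _ _)
    simp_rw [h2]
    exact Finset.sum_comm
  have hcomp : ∀ F, MemVF' φ ξ η F →
      MemN φ ξ η (fun x y z => (1 / 2) * (F2 ξ η F x y z + F4 φ ξ η F x y z)) ∧
      MemNt φ ξ η (fun x y z => (1 / 2) * (F2 ξ η F x y z - F4 φ ξ η F x y z)) ∧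
      ∀ x y z, F x y z = (1 / 2) * (F2 ξ η F x y z + F4 φ ξ η F x y z) +
        (1 / 2) * (F2 ξ η F x y z - F4 φ ξ η F x y z) := by
    intro F hF
    have hF2e : ∀ x y z, F2 ξ η F x y z = F x y z :=
      fun x y z => (vf'_eq_F2 hacm hF x y z).symm
    have hp1 : (fun x y z => (1 / 2 : ℝ) * (F2 ξ η F x y z + F4 φ ξ η F x y z))
        = fun x y z => (1 / 2 : ℝ) * F x y z + (1 / 2) * F4 φ ξ η F x y z := by
      funext x y z; rw [hF2e]; ring
    have hp2 : (fun x y z => (1 / 2 : ℝ) * (F2 ξ η F x y z - F4 φ ξ η F x y z))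
        = fun x y z => (1 / 2 : ℝ) * F x y z + (-(1 / 2)) * F4 φ ξ η F x y z := by
      funext x y z; rw [hF2e]; ring
    refine ⟨⟨?_, ?_⟩, ⟨?_, ?_⟩, ?_⟩
    · rw [hp1]; exact vf'_combo (1 / 2) (1 / 2) hF (vf'_F4 hacm hF)
    · rw [hp1]
      funext x y z
      rw [F4_combo (1 / 2) (1 / 2) F (F4 φ ξ η F) x y z, vf'_F4_F4 hacm hF x y z]
      show (1 / 2 : ℝ) * F x y z + (1 / 2) * F4 φ ξ η F x y z
        = 1 / 2 * F4 φ ξ η F x y z + 1 / 2 * F x y z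
      ring
    · rw [hp2]; exact vf'_combo (1 / 2) (-(1 / 2)) hF (vf'_F4 hacm hF)
    · rw [hp2]
      funext x y z
      show (1 / 2 : ℝ) * F x y z + (-(1 / 2)) * F4 φ ξ η F x y z
        = -(F4 φ ξ η (fun x y z => (1 / 2 : ℝ) * F x y z
            + (-(1 / 2)) * F4 φ ξ η F x y z) x y z)
      rw [F4_combo (1 / 2) (-(1 / 2)) F (F4 φ ξ η F) x y z, vf'_F4_F4 hacm hF x y z]
      ring
    · intro x y z
      have := hF2e x y z
      linarith
  refine ⟨hL4mem, ?_, ?_, hiso, ?_, ?_, hcomp, ?_, ?_⟩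
  · intro a F G
    funext x y z; simp only [L4, F4]; ring
  · -- involution
    intro F hF
    funext x y z
    show -(η y * L4 φ ξ η F (φ x) ξ (φ z) - η z * L4 φ ξ η F (φ x) ξ (φ y)) = F x y z
    rw [L4_xi hacm hF.1.1, L4_xi hacm hF.1.1, vf'_phi2 hacm hF, vf'_phi2 hacm hF]
    conv_rhs => rw [vf'_eq_F2 hacm hF x y z]
    ring
  · -- commutes with A
    intro A hAφ hAξ F hF
    have hsymmξ : A.symm ξ = ξ := by
      conv_lhs => rw [← hAξ]
      exact A.symm_apply_apply ξ
    have hsymmφ : ∀ x, A.symm (φ x) = φ (A.symm x) := by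
      intro x
      apply A.injective
      rw [A.apply_symm_apply, hAφ, A.apply_symm_apply]
    have hηA : ∀ y, η (A.symm y) = η y := by
      intro y
      rw [acm_eta_inner hacm, acm_eta_inner hacm]
      conv_lhs => rw [← hsymmξ]
      exact A.symm.inner_map_map y ξ
    funext x y z
    simp only [L4, F4, actA, hsymmφ, hsymmξ, hηA]
  · -- eigenspace characterizations
    intro F _
    constructor
    · constructor
      · intro h; funext x y z
        have := congrFun (congrFun (congrFun h x) y) z
        simp only [L4, Pi.neg_apply] at this
        linarith
      · intro h; funext x y z
        have := congrFun (congrFun (congrFun h x) y) z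
        simp only [L4, Pi.neg_apply]
        linarith
    · constructor
      · intro h; funext x y z
        have := congrFun (congrFun (congrFun h x) y) z
        simp only [L4] at this
        simp only [Pi.neg_apply]
        linarith
      · intro h; funext x y z
        have := congrFun (congrFun (congrFun h x) y) z
        simp only [Pi.neg_apply] at this
        simp only [L4]
        linarith
  · -- unique decomposition
    intro F hF
    obtain ⟨hN, hNt, hdec⟩ := hcomp F hF
    refine ⟨(fun x y z => (1 / 2) * (F2 ξ η F x y z + F4 φ ξ η F x y z),
             fun x y z => (1 / 2) * (F2 ξ η F x y z - F4 φ ξ η F x y z)),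
      ⟨hN, hNt, ?_⟩, ?_⟩
    · funext x y z
      simp only [Pi.add_apply]
      exact hdec x y z
    · rintro ⟨q₁, q₂⟩ ⟨hq₁, hq₂, hsum⟩
      have hq1e : ∀ x y z, q₁ x y z = F4 φ ξ η q₁ x y z :=
        fun x y z => congrFun (congrFun (congrFun hq₁.2 x) y) z
      have hq2e : ∀ x y z, q₂ x y z = -(F4 φ ξ η q₂ x y z) := by
        intro x y z
        have := congrFun (congrFun (congrFun hq₂.2 x) y) z
        simpa using this
      have hFe : ∀ x y z, F x y z = q₁ x y z + q₂ x y z := by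
        intro x y z
        have := congrFun (congrFun (congrFun hsum x) y) z
        simpa using this
      have hF4sum : ∀ x y z, F4 φ ξ η F x y z
          = F4 φ ξ η q₁ x y z + F4 φ ξ η q₂ x y z := by
        intro x y z
        simp only [F4]
        rw [hFe, hFe]
        ring
      have hF2e : ∀ x y z, F2 ξ η F x y z = F x y z :=
        fun x y z => (vf'_eq_F2 hacm hF x y z).symm
      refine Prod.ext ?_ ?_
      · funext x y z
        have h1 := hq1e x y z; have h2 := hq2e x y z; have h3 := hFe x y z
        have h4 := hF4sum x y z; have h5 := hF2e x y z
        show q₁ x y z = (1 / 2) * (F2 ξ η F x y z + F4 φ ξ η F x y z)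
        linarith
      · funext x y z
        have h1 := hq1e x y z; have h2 := hq2e x y z; have h3 := hFe x y z
        have h4 := hF4sum x y z; have h5 := hF2e x y z
        show q₂ x y z = (1 / 2) * (F2 ξ η F x y z - F4 φ ξ η F x y z)
        linarith
  · -- orthogonality
    intro F G hFN hGNt
    have hF := hFN.1
    have hG := hGNt.1
    have hiso' := hiso F G hF hG
    have hFeq : ∀ x y z, F4 φ ξ η F x y z = F x y z :=
      fun x y z => (congrFun (congrFun (congrFun hFN.2 x) y) z).symm
    have hGeq : ∀ x y z, F4 φ ξ η G x y z = -(G x y z) := by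
      intro x y z
      have := congrFun (congrFun (congrFun hGNt.2 x) y) z
      simp only [Pi.neg_apply] at this
      linarith
    have h1 : innerF e (L4 φ ξ η F) (L4 φ ξ η G) = -innerF e F G := by
      unfold innerF
      have hpt : ∀ i j k : Fin (2 * n + 1),
          L4 φ ξ η F (e i) (e j) (e k) * L4 φ ξ η G (e i) (e j) (e k)
            = -(F (e i) (e j) (e k) * G (e i) (e j) (e k)) := by
        intro i j k
        show -(F4 φ ξ η F (e i) (e j) (e k)) * -(F4 φ ξ η G (e i) (e j) (e k)) = _
        rw [hFeq, hGeq]; ring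
      simp_rw [hpt, Finset.sum_neg_distrib]
    linarith
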